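/- Let λ: S → ℕ be a length function on a poset S. Suppose μ: S → P and μ': S → P' are maps into posets each satisfying: (P1) x ≤ y implies μ(x) ≤ μ(y); (P2) μ(x) = μ(y) implies λ(x) = λ(y); (P3) if μ(x') < μ(y) for all x' < x and λ(x) ≥ λ(y), then μ(x) ≤ μ(y). Then for all x, y ∈ S: μ(x) ≤ μ(y) if and only if μ'(x) ≤ μ'(y). In particular, any such μ is totally preordered (μ(x) ≤ μ(y) or μ(y) ≤ μ(x) for all x, y), and the induced preorder coincides with the one given by the chain length function λ*. -/

import Mathlib

/-- The lexicographic order on finite subsets of ℕ: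
`X ≤ Y` iff `min (Y \ X) ≤ min (X \ Y)`, with `min ∅ = ⊤`. -/
def lexLE (X Y : Finset ℕ) : Prop :=
  (Y \ X).min ≤ (X \ Y).min

/-- Strict lexicographic order. -/
def lexLT (X Y : Finset ℕ) : Prop :=
  lexLE X Y ∧ ¬ lexLE Y X

/-- `X` is a finite chain in the poset `S` with maximal element `x`. -/
def IsChainWithMax {S : Type*} [PartialOrder S] (X : Finset S) (x : S) : Prop :=
  IsChain (· ≤ ·) (X : Set S) ∧ x ∈ X ∧ ∀ y ∈ X, y ≤ x

/-- `mu` is the chain length function of the length function `lam`: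
`mu x` is the lexicographic maximum of `lam(X)` over all finite chains `X`
with maximal element `x`. -/
def IsChainLengthFn {S : Type*} [PartialOrder S] (lam : S → ℕ)
    (mu : S → Finset ℕ) : Prop :=
  ∀ x : S,
    (∃ X : Finset S, IsChainWithMax X x ∧ X.image lam = mu x) ∧
    (∀ X : Finset S, IsChainWithMax X x → lexLE (X.image lam) (mu x))

namespace GRaux

open Finset

theorem min_wit {s : Finset ℕ} {c : ℕ} (h : s.min ≤ (c : WithTop ℕ)) :
    ∃ d ∈ s, (d : WithTop ℕ) = s.min ∧ d ≤ c := by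
  have hne : s.Nonempty := by
    rcases s.eq_empty_or_nonempty with rfl | h'
    · simp [Finset.min_empty] at h
    · exact h'
  obtain ⟨a, ha⟩ := Finset.min_of_nonempty hne
  refine ⟨a, Finset.mem_of_min ha, ha.symm, ?_⟩
  rw [ha] at h; exact WithTop.coe_le_coe.mp h

theorem lexLE_refl (X : Finset ℕ) : lexLE X X := le_refl _

theorem lexLE_total (X Y : Finset ℕ) : lexLE X Y ∨ lexLE Y X := le_total _ _

theorem lexLE_of_subset {X Y : Finset ℕ} (h : X ⊆ Y) : lexLE X Y := by
  unfold lexLE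
  rw [Finset.sdiff_eq_empty_iff_subset.mpr h, Finset.min_empty]
  exact le_top

theorem lexLE_antisymm {X Y : Finset ℕ} (h1 : lexLE X Y) (h2 : lexLE Y X) : X = Y := by
  have h : (Y \ X).min = (X \ Y).min := le_antisymm h1 h2
  rcases eq_or_ne ((Y \ X).min) ⊤ with ht | ht
  · have hYX : Y ⊆ X := Finset.sdiff_eq_empty_iff_subset.mp (Finset.min_eq_top.mp ht)
    have hXY : X ⊆ Y := Finset.sdiff_eq_empty_iff_subset.mp (Finset.min_eq_top.mp (h ▸ ht))
    exact Finset.Subset.antisymm hXY hYX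
  · obtain ⟨a, ha⟩ := Option.ne_none_iff_exists'.mp ht
    have ha1 : a ∈ Y \ X := Finset.mem_of_min ha
    have ha2 : a ∈ X \ Y := Finset.mem_of_min (h ▸ ha)
    simp only [Finset.mem_sdiff] at ha1 ha2
    exact absurd ha2.1 ha1.2

theorem lexLT_iff {X Y : Finset ℕ} : lexLT X Y ↔ (Y \ X).min < (X \ Y).min := by
  unfold lexLT lexLE
  constructor
  · rintro ⟨h1, h2⟩; exact lt_of_le_of_ne h1 (fun he => h2 (le_of_eq he.symm))
  · intro h; exact ⟨le_of_lt h, fun h' => absurd h (not_lt_of_ge h')⟩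

theorem lexLE_trans {X Y Z : Finset ℕ} (hXY : lexLE X Y) (hYZ : lexLE Y Z) : lexLE X Z := by
  unfold lexLE at *
  by_contra hc
  push_neg at hc
  -- hc : (X \ Z).min < (Z \ X).min
  have hwit : ((X \ Z).min : WithTop ℕ) ≤ (X \ Z).min := le_refl _
  have hne : (X \ Z).Nonempty := by
    rcases (X \ Z).eq_empty_or_nonempty with he | h'
    · rw [he, Finset.min_empty] at hc; exact absurd hc (not_top_lt)
    · exact h'
  obtain ⟨c, hcmin⟩ := Finset.min_of_nonempty hne
  have hcmem := Finset.mem_of_min hcmin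
  rw [Finset.mem_sdiff] at hcmem
  obtain ⟨hcX, hcZ⟩ := hcmem
  -- (†): every d ∈ Z \ X has c < d
  have hdag : ∀ d ∈ Z \ X, c < d := by
    intro d hd
    have : (Z \ X).min ≤ (d : WithTop ℕ) := Finset.min_le hd
    have h2 : ((c : WithTop ℕ)) < d := lt_of_lt_of_le (by rw [hcmin] at hc; exact hc) this
    exact_mod_cast h2
  by_cases hcY : c ∈ Y
  · -- c ∈ Y \ Z
    have h1 : (Z \ Y).min ≤ (c : WithTop ℕ) :=
      le_trans hYZ (Finset.min_le (Finset.mem_sdiff.mpr ⟨hcY, hcZ⟩))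
    obtain ⟨d, hd, hdmin, hdc⟩ := min_wit h1
    rw [Finset.mem_sdiff] at hd
    by_cases hdX : d ∈ X
    · have hd_ne : d ≠ c := fun he => hcZ (he ▸ hd.1)
      have hdc' : d < c := lt_of_le_of_ne hdc hd_ne
      have h2 : (Y \ X).min ≤ (d : WithTop ℕ) :=
        le_trans hXY (Finset.min_le (Finset.mem_sdiff.mpr ⟨hdX, hd.2⟩))
      obtain ⟨e, he, hemin, hed⟩ := min_wit h2
      rw [Finset.mem_sdiff] at he
      by_cases heZ : e ∈ Z
      · exact absurd (hdag e (Finset.mem_sdiff.mpr ⟨heZ, he.2⟩)) (not_lt_of_ge (le_of_lt (lt_of_le_of_lt hed hdc')))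
      · -- e ∈ Y \ Z, so min (Z\Y) ≤ min (Y\Z) ≤ e, i.e. d ≤ e; with e ≤ d get d = e
        have h3 : ((d : WithTop ℕ)) ≤ (e : WithTop ℕ) := by
          rw [hdmin]
          exact le_trans hYZ (Finset.min_le (Finset.mem_sdiff.mpr ⟨he.1, heZ⟩))
        have h3' : d ≤ e := by exact_mod_cast h3
        have : d = e := le_antisymm h3' hed
        exact he.2 (this ▸ hdX)
    · exact absurd (hdag d (Finset.mem_sdiff.mpr ⟨hd.1, hdX⟩)) (not_lt_of_ge hdc)
  · -- c ∈ X \ Y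
    have h1 : (Y \ X).min ≤ (c : WithTop ℕ) :=
      le_trans hXY (Finset.min_le (Finset.mem_sdiff.mpr ⟨hcX, hcY⟩))
    obtain ⟨e, he, hemin, hec⟩ := min_wit h1
    rw [Finset.mem_sdiff] at he
    by_cases heZ : e ∈ Z
    · exact absurd (hdag e (Finset.mem_sdiff.mpr ⟨heZ, he.2⟩)) (not_lt_of_ge hec)
    · have h2 : (Z \ Y).min ≤ (e : WithTop ℕ) :=
        le_trans hYZ (Finset.min_le (Finset.mem_sdiff.mpr ⟨he.1, heZ⟩))
      obtain ⟨d, hd, hdmin, hde⟩ := min_wit h2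
      rw [Finset.mem_sdiff] at hd
      by_cases hdX : d ∈ X
      · -- d ∈ X \ Y, so min(Y\X) ≤ d, i.e. e ≤ d; with d ≤ e get d = e, contra d∈X e∉X
        have h3 : ((e : WithTop ℕ)) ≤ (d : WithTop ℕ) := by
          rw [hemin]
          exact le_trans hXY (Finset.min_le (Finset.mem_sdiff.mpr ⟨hdX, hd.2⟩))
        have h3' : e ≤ d := by exact_mod_cast h3
        have : d = e := le_antisymm hde h3'
        exact he.2 (this ▸ hdX)
      · exact absurd (hdag d (Finset.mem_sdiff.mpr ⟨hd.1, hdX⟩))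
          (not_lt_of_ge (le_trans hde hec))

theorem lexLE_insert_iff {m : ℕ} {X Y : Finset ℕ} (hmX : m ∉ X) (hmY : m ∉ Y) :
    lexLE (insert m X) (insert m Y) ↔ lexLE X Y := by
  unfold lexLE
  rw [Finset.insert_sdiff_insert, Finset.insert_sdiff_insert,
    Finset.sdiff_insert_of_notMem hmY, Finset.sdiff_insert_of_notMem hmX]



theorem tot_aux {S P : Type*} [PartialOrder S] [PartialOrder P]
    (lam : S → ℕ) (hmono : ∀ x y : S, x < y → lam x < lam y)
    (mu : S → P)
    (hP1 : ∀ x y : S, x ≤ y → mu x ≤ mu y)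
    (hP2 : ∀ x y : S, mu x = mu y → lam x = lam y)
    (hP3 : ∀ x y : S, (∀ x' : S, x' < x → mu x' < mu y) → lam y ≤ lam x → mu x ≤ mu y) :
    ∀ x y : S, mu x ≤ mu y ∨ mu y ≤ mu x := by
  have ltA : ∀ a b : S, a < b → mu a < mu b := fun a b h =>
    lt_of_le_of_ne (hP1 _ _ h.le) (fun he => absurd (hP2 _ _ he) (Nat.ne_of_lt (hmono _ _ h)))
  suffices H : ∀ n x y, lam x + lam y = n → (mu x ≤ mu y ∨ mu y ≤ mu x) from fun x y => H _ x y rfl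
  intro n
  induction n using Nat.strong_induction_on with
  | _ n IH =>
  have half : ∀ x y, lam x + lam y = n → lam y ≤ lam x → (mu x ≤ mu y ∨ mu y ≤ mu x) := by
    intro x y hn hyx
    by_cases hall : ∀ x', x' < x → mu x' < mu y
    · exact Or.inl (hP3 x y hall hyx)
    · push_neg at hall
      obtain ⟨x', hx', hnlt⟩ := hall
      have hsum : lam x' + lam y < n := by
        subst hn; exact Nat.add_lt_add_right (hmono _ _ hx') _
      rcases IH _ hsum x' y rfl with h | h
      · have heq : mu x' = mu y := by
          rcases lt_or_eq_of_le h with h' | h'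
          · exact absurd h' hnlt
          · exact h'
        refine Or.inr ?_
        rw [← heq]
        exact (ltA _ _ hx').le
      · exact Or.inr (le_trans h (ltA _ _ hx').le)
  intro x y hn
  rcases le_total (lam y) (lam x) with h | h
  · exact half x y hn h
  · exact (half y x (by omega) h).symm

theorem key {S P P' : Type*} [PartialOrder S] [PartialOrder P] [PartialOrder P']
    (lam : S → ℕ) (hmono : ∀ x y : S, x < y → lam x < lam y)
    (mu : S → P) (mu' : S → P')
    (hP1 : ∀ x y : S, x ≤ y → mu x ≤ mu y)
    (hP2 : ∀ x y : S, mu x = mu y → lam x = lam y)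
    (hP3 : ∀ x y : S, (∀ x' : S, x' < x → mu x' < mu y) → lam y ≤ lam x → mu x ≤ mu y)
    (hP1' : ∀ x y : S, x ≤ y → mu' x ≤ mu' y)
    (hP2' : ∀ x y : S, mu' x = mu' y → lam x = lam y)
    (hP3' : ∀ x y : S, (∀ x' : S, x' < x → mu' x' < mu' y) → lam y ≤ lam x → mu' x ≤ mu' y) :
    ∀ x y : S, mu x ≤ mu y ↔ mu' x ≤ mu' y := by
  have ltA : ∀ a b : S, a < b → mu a < mu b := fun a b h =>
    lt_of_le_of_ne (hP1 _ _ h.le) (fun he => absurd (hP2 _ _ he) (Nat.ne_of_lt (hmono _ _ h)))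
  have ltA' : ∀ a b : S, a < b → mu' a < mu' b := fun a b h =>
    lt_of_le_of_ne (hP1' _ _ h.le) (fun he => absurd (hP2' _ _ he) (Nat.ne_of_lt (hmono _ _ h)))
  have tot := tot_aux lam hmono mu hP1 hP2 hP3
  have tot' := tot_aux lam hmono mu' hP1' hP2' hP3'
  suffices H : ∀ n x y, lam x + lam y = n → (mu x ≤ mu y ↔ mu' x ≤ mu' y) from
    fun x y => H _ x y rfl
  intro n
  induction n using Nat.strong_induction_on with
  | _ n IH =>
  have A : ∀ x y : S, lam x + lam y = n → lam y ≤ lam x → mu x ≤ mu y → mu' x ≤ mu' y := by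
    intro x y hn hyx hxy
    refine hP3' x y ?_ hyx
    intro x' hx'
    have h1 : mu x' < mu y := lt_of_lt_of_le (ltA _ _ hx') hxy
    have hsum : lam x' + lam y < n := by
      subst hn; exact Nat.add_lt_add_right (hmono _ _ hx') _
    have h2 : mu' x' ≤ mu' y := (IH _ hsum x' y rfl).mp h1.le
    refine lt_of_le_of_ne h2 (fun he => ?_)
    have hsum2 : lam y + lam x' < n := by omega
    have h3 : mu y ≤ mu x' := (IH _ hsum2 y x' rfl).mpr (le_of_eq he.symm)
    exact absurd h3 (not_le_of_gt h1)
  have A' : ∀ x y : S, lam x + lam y = n → lam y ≤ lam x → mu' x ≤ mu' y → mu x ≤ mu y := by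
    intro x y hn hyx hxy
    refine hP3 x y ?_ hyx
    intro x' hx'
    have h1 : mu' x' < mu' y := lt_of_lt_of_le (ltA' _ _ hx') hxy
    have hsum : lam x' + lam y < n := by
      subst hn; exact Nat.add_lt_add_right (hmono _ _ hx') _
    have h2 : mu x' ≤ mu y := (IH _ hsum x' y rfl).mpr h1.le
    refine lt_of_le_of_ne h2 (fun he => ?_)
    have hsum2 : lam y + lam x' < n := by omega
    have h3 : mu' y ≤ mu' x' := (IH _ hsum2 y x' rfl).mp (le_of_eq he.symm)
    exact absurd h3 (not_le_of_gt h1)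
  intro x y hn
  constructor
  · intro hxy
    rcases le_or_gt (lam y) (lam x) with h | h
    · exact A x y hn h hxy
    · rcases tot' x y with h' | h'
      · exact h'
      · have h2 : mu y ≤ mu x := A' y x (by omega) h.le h'
        have : lam x = lam y := hP2 x y (le_antisymm hxy h2)
        omega
  · intro hxy
    rcases le_or_gt (lam y) (lam x) with h | h
    · exact A' x y hn h hxy
    · rcases tot x y with h' | h'
      · exact h'
      · have h2 : mu' y ≤ mu' x := A y x (by omega) h.le h'
        have : lam x = lam y := hP2' x y (le_antisymm hxy h2)
        omega


/-- Type synonym for `Finset ℕ` carrying the lexicographic partial order. -/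
def GRL := Finset ℕ

instance : PartialOrder GRL where
  le := lexLE
  le_refl := lexLE_refl
  le_trans _ _ _ := lexLE_trans
  le_antisymm _ _ := lexLE_antisymm

section Star


variable {S : Type*} [PartialOrder S] (lam : S → ℕ) (mustar : S → Finset ℕ)

theorem star_max (hmono : ∀ x y : S, x < y → lam x < lam y)
    (hmustar : IsChainLengthFn lam mustar) (x : S) :
    lam x ∈ mustar x ∧ ∀ a ∈ mustar x, a ≤ lam x := by
  obtain ⟨⟨X, ⟨hch, hxX, hub⟩, him⟩, -⟩ := hmustar x
  constructor
  · rw [← him]; exact Finset.mem_image_of_mem lam hxX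
  · intro a ha
    rw [← him] at ha
    obtain ⟨z, hz, rfl⟩ := Finset.mem_image.mp ha
    rcases eq_or_lt_of_le (hub z hz) with h | h
    · rw [h]
    · exact (hmono _ _ h).le

theorem star_P2 (hmono : ∀ x y : S, x < y → lam x < lam y)
    (hmustar : IsChainLengthFn lam mustar) (x y : S)
    (h : mustar x = mustar y) : lam x = lam y := by
  have hx := star_max lam mustar hmono hmustar x
  have hy := star_max lam mustar hmono hmustar y
  exact le_antisymm (hy.2 _ (h ▸ hx.1)) (hx.2 _ (h.symm ▸ hy.1))

theorem star_P1 (hmono : ∀ x y : S, x < y → lam x < lam y)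
    (hmustar : IsChainLengthFn lam mustar) (x y : S) (hxy : x ≤ y) :
    lexLE (mustar x) (mustar y) := by
  classical
  rcases eq_or_lt_of_le hxy with rfl | hlt
  · exact lexLE_refl _
  obtain ⟨⟨X, ⟨hch, hxX, hub⟩, him⟩, -⟩ := hmustar x
  have hY : IsChainWithMax (insert y X) y := by
    refine ⟨?_, Finset.mem_insert_self _ _, ?_⟩
    · rw [Finset.coe_insert]
      exact hch.insert (fun z hz _ => Or.inr (le_trans (hub z hz) hlt.le))
    · intro z hz
      rcases Finset.mem_insert.mp hz with rfl | hz'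
      · exact le_refl _
      · exact le_trans (hub z hz') hlt.le
  have h1 := (hmustar y).2 _ hY
  rw [Finset.image_insert, him] at h1
  exact lexLE_trans (lexLE_of_subset (Finset.subset_insert _ _)) h1

theorem star_P3 (hmono : ∀ x y : S, x < y → lam x < lam y)
    (hmustar : IsChainLengthFn lam mustar) (x y : S)
    (hall : ∀ x' : S, x' < x → lexLT (mustar x') (mustar y))
    (hl : lam y ≤ lam x) : lexLE (mustar x) (mustar y) := by
  classical
  obtain ⟨⟨X, ⟨hch, hxX, hub⟩, him⟩, hmaxprop⟩ := hmustar x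
  have hmax := star_max lam mustar hmono hmustar
  set B := mustar y with hB
  have hBmax : ∀ b ∈ B, b ≤ lam x := fun b hb => le_trans ((hmax y).2 b hb) hl
  have hlamyB : lam y ∈ B := (hmax y).1
  by_cases hsingle : ∀ z ∈ X, z = x
  · have hmx : mustar x = {lam x} := by
      rw [← him, Finset.eq_singleton_iff_unique_mem.mpr ⟨hxX, hsingle⟩,
        Finset.image_singleton]
    rw [hmx]
    by_cases hxB : lam x ∈ B
    · exact lexLE_of_subset (Finset.singleton_subset_iff.mpr hxB)
    · show (B \ {lam x}).min ≤ _
      apply Finset.le_min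
      intro b hb
      have hbx : b = lam x := by
        have := (Finset.mem_sdiff.mp hb).1
        simpa using this
      subst hbx
      have h1 : lam y ∈ B \ {lam x} := by
        refine Finset.mem_sdiff.mpr ⟨hlamyB, ?_⟩
        simp only [Finset.mem_singleton]
        intro h
        exact hxB (h ▸ hlamyB)
      calc (B \ {lam x}).min ≤ (lam y : WithTop ℕ) := Finset.min_le h1
        _ ≤ (lam x : WithTop ℕ) := by exact_mod_cast hl
  · push_neg at hsingle
    obtain ⟨z, hzX, hzx⟩ := hsingle
    set X' := X.erase x with hX'
    have hzX' : z ∈ X' := Finset.mem_erase.mpr ⟨hzx, hzX⟩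
    obtain ⟨x', hx'X', hx'm0⟩ := Finset.exists_maximal (s := X') ⟨z, hzX'⟩
    have hx'm : ∀ w ∈ X', ¬ x' < w := fun w hw h => not_le_of_gt h (hx'm0 hw h.le)
    have hub' : ∀ w ∈ X', w ≤ x' := by
      intro w hw
      rcases eq_or_ne w x' with rfl | hne
      · exact le_refl _
      · rcases hch (Finset.mem_coe.mpr (Finset.mem_of_mem_erase hw))
          (Finset.mem_coe.mpr (Finset.mem_of_mem_erase hx'X')) hne with h | h
        · exact h
        · exact absurd (lt_of_le_of_ne h (fun he => hne he.symm)) (hx'm w hw)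
    have hx'x : x' < x :=
      lt_of_le_of_ne (hub _ (Finset.mem_of_mem_erase hx'X')) (Finset.mem_erase.mp hx'X').1
    have hchainX' : IsChainWithMax X' x' := by
      refine ⟨hch.mono ?_, hx'X', hub'⟩
      intro w hw
      exact Finset.mem_coe.mpr (Finset.mem_of_mem_erase (Finset.mem_coe.mp hw))
    have hXins : X = insert x X' := (Finset.insert_erase hxX).symm
    have hmxlt : ∀ a ∈ mustar x', a < lam x :=
      fun a ha => lt_of_le_of_lt ((hmax x').2 a ha) (hmono _ _ hx'x)
    have himlt : ∀ a ∈ X'.image lam, a < lam x := by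
      intro a ha
      obtain ⟨w, hw, rfl⟩ := Finset.mem_image.mp ha
      have h1 : lam w ≤ lam x' := by
        rcases eq_or_lt_of_le (hub' w hw) with h | h
        · rw [h]
        · exact (hmono _ _ h).le
      exact lt_of_le_of_lt h1 (hmono _ _ hx'x)
    have hkey : X'.image lam = mustar x' := by
      refine lexLE_antisymm ((hmustar x').2 _ hchainX') ?_
      obtain ⟨⟨Y', ⟨hchY, hx'Y, hubY⟩, himY'⟩, -⟩ := hmustar x'
      have hY'' : IsChainWithMax (insert x Y') x := by
        refine ⟨?_, Finset.mem_insert_self _ _, ?_⟩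
        · rw [Finset.coe_insert]
          exact hchY.insert (fun w hw _ => Or.inr (le_trans (hubY w hw) hx'x.le))
        · intro w hw
          rcases Finset.mem_insert.mp hw with rfl | hw'
          · exact le_refl _
          · exact le_trans (hubY w hw') hx'x.le
      have h1 := hmaxprop _ hY''
      rw [Finset.image_insert, himY', ← him, hXins, Finset.image_insert] at h1
      refine (lexLE_insert_iff ?_ ?_).mp h1
      · exact fun h => lt_irrefl _ (hmxlt _ h)
      · exact fun h => lt_irrefl _ (himlt _ h)
    have hmxeq : mustar x = insert (lam x) (mustar x') := by
      rw [← him, hXins, Finset.image_insert, hkey]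
    have hlt := hall x' hx'x
    rw [lexLT_iff] at hlt
    set C := mustar x' with hC
    rw [hmxeq]
    show (B \ insert (lam x) C).min ≤ (insert (lam x) C \ B).min
    have hmC : lam x ∉ C := fun h => lt_irrefl _ (hmxlt _ h)
    have hBCne : (B \ C).Nonempty := by
      rcases (B \ C).eq_empty_or_nonempty with he | h'
      · rw [he, Finset.min_empty] at hlt
        exact absurd hlt not_top_lt
      · exact h'
    obtain ⟨b₀, hb₀⟩ := Finset.min_of_nonempty hBCne
    have hb₀mem := Finset.mem_of_min hb₀
    by_cases hmB : lam x ∈ B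
    · have e1 : insert (lam x) C \ B = C \ B := Finset.insert_sdiff_of_mem _ hmB
      have e2 : B \ insert (lam x) C = (B \ C).erase (lam x) := by
        ext b
        simp only [Finset.mem_sdiff, Finset.mem_erase, Finset.mem_insert]
        tauto
      rw [e1, e2]
      by_cases hb₀x : b₀ = lam x
      · have hCB : C \ B = ∅ := by
          rw [Finset.eq_empty_iff_forall_notMem]
          intro c hc
          have h1 : (C \ B).min ≤ (c : WithTop ℕ) := Finset.min_le hc
          have h2 : ((lam x : WithTop ℕ)) < c := by
            have h2' := lt_of_lt_of_le hlt h1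
            rw [hb₀, hb₀x] at h2'
            exact h2'
          have h3 : (lam x : ℕ) < c := by exact_mod_cast h2
          exact absurd (hmxlt c (Finset.mem_sdiff.mp hc).1) (not_lt_of_ge h3.le)
        rw [hCB, Finset.min_empty]
        exact le_top
      · have hmem : b₀ ∈ (B \ C).erase (lam x) := Finset.mem_erase.mpr ⟨hb₀x, hb₀mem⟩
        refine le_trans (Finset.min_le hmem) ?_
        rw [← hb₀]
        exact hlt.le
    · have e1 : insert (lam x) C \ B = insert (lam x) (C \ B) :=
        Finset.insert_sdiff_of_notMem _ hmB
      have e2 : B \ insert (lam x) C = B \ C := by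
        ext b
        simp only [Finset.mem_sdiff, Finset.mem_insert]
        constructor
        · rintro ⟨hbB, h⟩
          exact ⟨hbB, fun hc => h (Or.inr hc)⟩
        · rintro ⟨hbB, h⟩
          refine ⟨hbB, ?_⟩
          rintro (rfl | hc)
          · exact hmB hbB
          · exact h hc
      rw [e1, e2, Finset.min_insert]
      refine le_min ?_ hlt.le
      rw [hb₀]
      exact_mod_cast hBmax b₀ (Finset.mem_sdiff.mp hb₀mem).1

end Star
end GRaux

/-- Axiomatic characterization of the Gabriel-Roiter measure: any two maps
`μ : S → P`, `μ' : S → P'` into partially ordered sets satisfying (P1)–(P3)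
induce the same preorder on `S`; this preorder is total and coincides with
the one given by the chain length function `λ*`. -/
theorem grMeasure_axiomatic {S : Type*} [PartialOrder S]
    {P : Type*} [PartialOrder P] {P' : Type*} [PartialOrder P']
    (lam : S → ℕ)
    (hpos : ∀ x : S, 0 < lam x)
    (hmono : ∀ x y : S, x < y → lam x < lam y)
    (hfin : ∀ (x : S) (n : ℕ), Set.Finite {x' : S | x' < x ∧ lam x' = n})
    (mustar : S → Finset ℕ) (hmustar : IsChainLengthFn lam mustar)
    (mu : S → P) (mu' : S → P')
    (hP1 : ∀ x y : S, x ≤ y → mu x ≤ mu y)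
    (hP2 : ∀ x y : S, mu x = mu y → lam x = lam y)
    (hP3 : ∀ x y : S, (∀ x' : S, x' < x → mu x' < mu y) → lam y ≤ lam x →
      mu x ≤ mu y)
    (hP1' : ∀ x y : S, x ≤ y → mu' x ≤ mu' y)
    (hP2' : ∀ x y : S, mu' x = mu' y → lam x = lam y)
    (hP3' : ∀ x y : S, (∀ x' : S, x' < x → mu' x' < mu' y) → lam y ≤ lam x →
      mu' x ≤ mu' y) :
    (∀ x y : S, mu x ≤ mu y ∨ mu y ≤ mu x) ∧
    (∀ x y : S, mu x ≤ mu y ↔ mu' x ≤ mu' y) ∧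
    (∀ x y : S, mu x ≤ mu y ↔ lexLE (mustar x) (mustar y)) := by
  classical
  let mus : S → GRaux.GRL := mustar
  have h1G : ∀ x y : S, x ≤ y → mus x ≤ mus y :=
    fun x y h => GRaux.star_P1 lam mustar hmono hmustar x y h
  have h2G : ∀ x y : S, mus x = mus y → lam x = lam y :=
    fun x y h => GRaux.star_P2 lam mustar hmono hmustar x y h
  have h3G : ∀ x y : S, (∀ x' : S, x' < x → mus x' < mus y) → lam y ≤ lam x →
      mus x ≤ mus y := by
    intro x y hall hl
    refine GRaux.star_P3 lam mustar hmono hmustar x y ?_ hl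
    intro x' hx'
    have h := hall x' hx'
    rw [lt_iff_le_not_ge] at h
    exact h
  have kmu := GRaux.key lam hmono mu mus hP1 hP2 hP3 h1G h2G h3G
  have kmu' := GRaux.key lam hmono mu' mus hP1' hP2' hP3' h1G h2G h3G
  refine ⟨?_, ?_, ?_⟩
  · intro x y
    rcases GRaux.lexLE_total (mustar x) (mustar y) with h | h
    · exact Or.inl ((kmu x y).mpr h)
    · exact Or.inr ((kmu y x).mpr h)
  · intro x y
    exact (kmu x y).trans (kmu' x y).symm
  · intro x y
    exact kmu x y
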